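/- arXiv:2208.01255 — 3 statements merged into one kernel-verified Lean document; each statement's English description precedes it below -/
import Mathlib

section
/- Let ℓ, m, n be positive integers, w ∈ S_{m,ℓ}, v ∈ S_{n,ℓ}, and let v₀ = w[n,ℓ]. If 1_m ⊞ v₀ ≤ (w ⊞ 1_n)·(1_m ⊞ v) in the Bruhat order on S_{m+n+ℓ}, then v = v₀. -/
/-- `u` is a minimal-length left coset representative in `S_{m,ℓ}`:
a permutation of `{1,…,m+ℓ}` (encoded `0`-indexed as `Fin (m + l)`) that is
strictly increasing on the first `m` values and on the last `l` values. -/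
def IsMinRep (m l : ℕ) (u : Equiv.Perm (Fin (m + l))) : Prop :=
  (∀ i j : Fin (m + l), i < j → (j : ℕ) < m → u i < u j) ∧
  (∀ i j : Fin (m + l), i < j → m ≤ (i : ℕ) → u i < u j)

/-- Transport a permutation of `Fin a` to a permutation of `Fin b` along `a = b`. -/
def permCast {a b : ℕ} (h : a = b) (u : Equiv.Perm (Fin a)) : Equiv.Perm (Fin b) :=
  Equiv.permCongr (finCongr h) u

/-- The concatenation `u ⊞ v` of permutations: it acts as `u` on the first `p`
values and as (the shift by `p` of) `v` on the last `q` values. -/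
def boxplus {p q : ℕ} (u : Equiv.Perm (Fin p)) (v : Equiv.Perm (Fin q)) :
    Equiv.Perm (Fin (p + q)) :=
  Equiv.permCongr finSumFinEquiv (Equiv.sumCongr u v)

/-- `w ⊞ 1_n`, viewed as a permutation of `{1,…,m+n+ℓ}`. -/
def bpFirst (m l n : ℕ) (w : Equiv.Perm (Fin (m + l))) : Equiv.Perm (Fin (m + n + l)) :=
  permCast (by omega) (boxplus w (1 : Equiv.Perm (Fin n)))

/-- `1_m ⊞ v`, viewed as a permutation of `{1,…,m+n+ℓ}`. -/
def bpSecond (m l n : ℕ) (v : Equiv.Perm (Fin (n + l))) : Equiv.Perm (Fin (m + n + l)) :=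
  permCast (by omega) (boxplus (1 : Equiv.Perm (Fin m)) v)

/-- The number of inversions (the length) of a permutation. -/
def invCount {N : ℕ} (u : Equiv.Perm (Fin N)) : ℕ :=
  (Finset.univ.filter (fun p : Fin N × Fin N => p.1 < p.2 ∧ u p.2 < u p.1)).card

/-- One step of the Bruhat order: `x = t·u` for a transposition `t`, with
`ℓ(u) < ℓ(x)`. -/
def BruhatStep {N : ℕ} (u x : Equiv.Perm (Fin N)) : Prop :=
  (∃ a b : Fin N, a ≠ b ∧ x = Equiv.swap a b * u) ∧ invCount u < invCount x

/-- The Bruhat order on the symmetric group: the order generated by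
`u < t·u` whenever `t` is a transposition and `ℓ(u) < ℓ(t·u)`. -/
def BruhatLE {N : ℕ} (u x : Equiv.Perm (Fin N)) : Prop :=
  Relation.ReflTransGen BruhatStep u x

/-- The permutation `w[n,ℓ]` of `{1,…,n+ℓ}` sending `k ↦ k + ℓ` for `k ≤ n`
and `k ↦ k - n` for `n < k`. -/
def wshift (n l : ℕ) : Equiv.Perm (Fin (n + l)) :=
  finSumFinEquiv.symm.trans ((Equiv.sumComm (Fin n) (Fin l)).trans
    (finSumFinEquiv.trans (finCongr (by omega))))


section BruhatHelpers

open Equiv Finset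

-- value lemmas
theorem permCast_val {a b : ℕ} (h : a = b) (u : Equiv.Perm (Fin a)) (i : Fin b) :
    ((permCast h u) i : ℕ) = (u ⟨(i : ℕ), by omega⟩ : ℕ) := rfl

theorem boxplus_val_lt {p q : ℕ} (u : Equiv.Perm (Fin p)) (v : Equiv.Perm (Fin q))
    (i : Fin (p + q)) (h : (i : ℕ) < p) :
    ((boxplus u v) i : ℕ) = (u ⟨(i : ℕ), h⟩ : ℕ) := by
  have hsymm : finSumFinEquiv.symm i = Sum.inl (⟨(i : ℕ), h⟩ : Fin p) := by
    rw [Equiv.symm_apply_eq, finSumFinEquiv_apply_left]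
    exact Fin.ext rfl
  simp only [boxplus, Equiv.permCongr_apply, Equiv.sumCongr_apply, hsymm, Sum.map_inl,
    finSumFinEquiv_apply_left, Fin.coe_castAdd]

theorem boxplus_val_ge {p q : ℕ} (u : Equiv.Perm (Fin p)) (v : Equiv.Perm (Fin q))
    (i : Fin (p + q)) (h : p ≤ (i : ℕ)) :
    ((boxplus u v) i : ℕ) = p + (v ⟨(i : ℕ) - p, by omega⟩ : ℕ) := by
  have hsymm : finSumFinEquiv.symm i = Sum.inr (⟨(i : ℕ) - p, by omega⟩ : Fin q) := by
    rw [Equiv.symm_apply_eq, finSumFinEquiv_apply_right]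
    exact Fin.ext (by simp [Fin.natAdd]; omega)
  simp only [boxplus, Equiv.permCongr_apply, Equiv.sumCongr_apply, hsymm, Sum.map_inr,
    finSumFinEquiv_apply_right, Fin.coe_natAdd]

theorem bpFirst_val_lt (m l n : ℕ) (w : Equiv.Perm (Fin (m + l))) (i : Fin (m + n + l))
    (h : (i : ℕ) < m + l) : ((bpFirst m l n w) i : ℕ) = (w ⟨(i : ℕ), h⟩ : ℕ) := by
  rw [bpFirst, permCast_val]
  exact boxplus_val_lt w (1 : Equiv.Perm (Fin n)) ⟨(i : ℕ), by omega⟩ h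

theorem bpFirst_val_ge (m l n : ℕ) (w : Equiv.Perm (Fin (m + l))) (i : Fin (m + n + l))
    (h : m + l ≤ (i : ℕ)) : ((bpFirst m l n w) i : ℕ) = (i : ℕ) := by
  rw [bpFirst, permCast_val]
  have := boxplus_val_ge w (1 : Equiv.Perm (Fin n)) ⟨(i : ℕ), by omega⟩ h
  rw [this]
  simp only [Equiv.Perm.one_apply]
  omega

theorem bpSecond_val_lt (m l n : ℕ) (v : Equiv.Perm (Fin (n + l))) (i : Fin (m + n + l))
    (h : (i : ℕ) < m) : ((bpSecond m l n v) i : ℕ) = (i : ℕ) := by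
  rw [bpSecond, permCast_val]
  have := boxplus_val_lt (1 : Equiv.Perm (Fin m)) v ⟨(i : ℕ), by omega⟩ h
  rw [this]
  simp only [Equiv.Perm.one_apply]

theorem bpSecond_val_ge (m l n : ℕ) (v : Equiv.Perm (Fin (n + l))) (i : Fin (m + n + l))
    (h : m ≤ (i : ℕ)) :
    ((bpSecond m l n v) i : ℕ) = m + (v ⟨(i : ℕ) - m, by omega⟩ : ℕ) := by
  rw [bpSecond, permCast_val]
  exact boxplus_val_ge (1 : Equiv.Perm (Fin m)) v ⟨(i : ℕ), by omega⟩ h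

theorem wshift_val_lt (n l : ℕ) (b : Fin (n + l)) (h : (b : ℕ) < n) :
    ((wshift n l) b : ℕ) = (b : ℕ) + l := by
  have hsymm : finSumFinEquiv.symm b = Sum.inl (⟨(b : ℕ), h⟩ : Fin n) := by
    rw [Equiv.symm_apply_eq, finSumFinEquiv_apply_left]
    exact Fin.ext rfl
  simp only [wshift, Equiv.trans_apply, hsymm, Equiv.sumComm_apply, Sum.swap_inl,
    finSumFinEquiv_apply_right, finCongr_apply, Fin.coe_cast, Fin.coe_natAdd]
  omega

theorem wshift_val_ge (n l : ℕ) (b : Fin (n + l)) (h : n ≤ (b : ℕ)) :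
    ((wshift n l) b : ℕ) = (b : ℕ) - n := by
  have hsymm : finSumFinEquiv.symm b = Sum.inr (⟨(b : ℕ) - n, by omega⟩ : Fin l) := by
    rw [Equiv.symm_apply_eq, finSumFinEquiv_apply_right]
    exact Fin.ext (by simp [Fin.natAdd]; omega)
  simp only [wshift, Equiv.trans_apply, hsymm, Equiv.sumComm_apply, Sum.swap_inr,
    finSumFinEquiv_apply_left, finCongr_apply, Fin.coe_cast, Fin.coe_castAdd]

theorem invCount_lt_swap {N : ℕ} (u : Equiv.Perm (Fin N)) (p q : Fin N)
    (hpq : p < q) (huv : u p < u q) :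
    invCount u < invCount (Equiv.swap (u p) (u q) * u) := by
  show (Finset.univ.filter (fun z : Fin N × Fin N => z.1 < z.2 ∧ u z.2 < u z.1)).card <
    (Finset.univ.filter (fun z : Fin N × Fin N =>
      z.1 < z.2 ∧ (Equiv.swap (u p) (u q) * u) z.2 < (Equiv.swap (u p) (u q) * u) z.1)).card
  set x := Equiv.swap (u p) (u q) * u with hxdef
  have hx : ∀ i, x i = u (Equiv.swap p q i) := by
    intro i
    rw [hxdef, ← Equiv.mul_swap_eq_swap_mul]
    rfl
  set s := Equiv.swap p q with hsdef
  have hsp : s p = q := Equiv.swap_apply_left p q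
  have hsq : s q = p := Equiv.swap_apply_right p q
  have hso : ∀ i, i ≠ p → i ≠ q → s i = i := fun i h1 h2 => Equiv.swap_apply_of_ne_of_ne h1 h2
  have hss : ∀ i, s (s i) = i := fun i => Equiv.swap_apply_self p q i
  set Su := Finset.univ.filter (fun z : Fin N × Fin N => z.1 < z.2 ∧ u z.2 < u z.1) with hSu
  set Sx := Finset.univ.filter (fun z : Fin N × Fin N => z.1 < z.2 ∧ x z.2 < x z.1) with hSx
  have hpqx : (p, q) ∈ Sx := by
    simp only [hSx, Finset.mem_filter, Finset.mem_univ, true_and]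
    refine ⟨hpq, ?_⟩
    rw [hx, hx, hsp, hsq]
    exact huv
  set φ : Fin N × Fin N → Fin N × Fin N :=
    fun z => if (z.1 = p ∧ z.2 < q) ∨ (p < z.1 ∧ z.2 = q) then z else (s z.1, s z.2) with hφ
  have hmaps : ∀ z ∈ Su, φ z ∈ Sx.erase (p, q) := by
    rintro ⟨i, j⟩ hz
    simp only [hSu, Finset.mem_filter, Finset.mem_univ, true_and] at hz
    obtain ⟨hij, hu⟩ := hz
    have hnepq : ¬(i = p ∧ j = q) := by
      rintro ⟨h1, h2⟩
      rw [h1, h2] at hu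
      exact absurd huv (not_lt.2 hu.le)
    rw [Finset.mem_erase]
    simp only [hφ]
    by_cases hmid : (i = p ∧ j < q) ∨ (p < i ∧ j = q)
    · rw [if_pos hmid]
      simp only [hSx, Finset.mem_filter, Finset.mem_univ, true_and]
      rcases hmid with ⟨hip, hjq⟩ | ⟨hpi, hjq⟩
      · have hjp : j ≠ p := by rw [← hip]; exact hij.ne'
        have hjq' : j ≠ q := hjq.ne
        refine ⟨?_, hij, ?_⟩
        · intro hc; exact hjq' (congrArg Prod.snd hc)
        · rw [hx, hx, hip, hsp, hso j hjp hjq']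
          rw [hip] at hu
          exact lt_trans hu huv
      · have hip : i ≠ p := hpi.ne'
        have hiq : i ≠ q := by rw [← hjq]; exact hij.ne
        refine ⟨?_, hij, ?_⟩
        · intro hc; exact hip (congrArg Prod.fst hc)
        · rw [hx, hx, hjq, hsq, hso i hip hiq]
          rw [hjq] at hu
          exact lt_trans huv hu
    · rw [if_neg hmid]
      push_neg at hmid
      have hkey : s i < s j := by
        by_cases hip : i = p
        · have hjq : q < j := lt_of_le_of_ne (hmid.1 hip) (fun h => hnepq ⟨hip, h.symm⟩)
          rw [hip, hsp, hso j (hpq.trans hjq).ne' hjq.ne']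
          exact hjq
        · by_cases hiq : i = q
          · have hjq : q < j := by rw [← hiq]; exact hij
            rw [hiq, hsq, hso j (hpq.trans hjq).ne' hjq.ne']
            exact hpq.trans hjq
          · by_cases hjp : j = p
            · have hipp : i < p := by rw [← hjp]; exact hij
              rw [hjp, hsp, hso i hip (hipp.trans hpq).ne]
              exact hipp.trans hpq
            · by_cases hjq : j = q
              · have hipp : i < p := lt_of_le_of_ne (not_lt.1 (fun h => (hmid.2 h) hjq)) hip
                rw [hjq, hsq, hso i hip hiq]
                exact hipp
              · rw [hso i hip hiq, hso j hjp hjq]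
                exact hij
      refine ⟨?_, ?_⟩
      · intro hc
        have h1 : s i = p := congrArg Prod.fst hc
        have h2 : s j = q := congrArg Prod.snd hc
        have hiq : i = q := by rw [← hss i, h1, hsp]
        have hjp : j = p := by rw [← hss j, h2, hsq]
        rw [hiq, hjp] at hij
        exact absurd hpq (not_lt.2 hij.le)
      · simp only [hSx, Finset.mem_filter, Finset.mem_univ, true_and]
        refine ⟨hkey, ?_⟩
        rw [hx, hx, hss, hss]
        exact hu
  have hinj : Set.InjOn φ Su := by
    rintro ⟨i1, j1⟩ h1 ⟨i2, j2⟩ h2 heq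
    simp only [hSu, Finset.coe_filter, Set.mem_setOf_eq, Finset.mem_univ, true_and] at h1 h2
    simp only [hφ] at heq
    by_cases hm1 : (i1 = p ∧ j1 < q) ∨ (p < i1 ∧ j1 = q) <;>
      by_cases hm2 : (i2 = p ∧ j2 < q) ∨ (p < i2 ∧ j2 = q)
    · rw [if_pos hm1, if_pos hm2] at heq; exact heq
    · rw [if_pos hm1, if_neg hm2] at heq
      exfalso
      -- (i1,j1) = (s i2, s j2), so (i2,j2) = (s i1, s j1)
      have hfst : i1 = s i2 := congrArg Prod.fst heq
      have hsnd : j1 = s j2 := congrArg Prod.snd heq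
      have hi : i2 = s i1 := by rw [hfst, hss]
      have hj : j2 = s j1 := by rw [hsnd, hss]
      rcases hm1 with ⟨hip, hjq⟩ | ⟨hpi, hjq⟩
      · -- i1 = p, p < j1 < q : i2 = q, j2 = j1, but i2 < j2 means q < j1 < q
        have hj1p : j1 ≠ p := by rw [← hip]; exact h1.1.ne'
        have : i2 = q := by rw [hi, hip, hsp]
        have : j2 = j1 := by rw [hj, hso j1 hj1p hjq.ne]
        have := h2.1
        rw [‹i2 = q›, ‹j2 = j1›] at this
        exact absurd (this.trans hjq) (lt_irrefl q)
      · have hi1q : i1 ≠ q := by rw [← hjq]; exact h1.1.ne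
        have : j2 = p := by rw [hj, hjq, hsq]
        have : i2 = i1 := by rw [hi, hso i1 hpi.ne' hi1q]
        have := h2.1
        rw [‹i2 = i1›, ‹j2 = p›] at this
        exact absurd (this.trans hpi) (lt_irrefl i1)
    · rw [if_neg hm1, if_pos hm2] at heq
      exfalso
      have hfst : s i1 = i2 := congrArg Prod.fst heq
      have hsnd : s j1 = j2 := congrArg Prod.snd heq
      have hi : i1 = s i2 := by rw [← hfst, hss]
      have hj : j1 = s j2 := by rw [← hsnd, hss]
      rcases hm2 with ⟨hip, hjq⟩ | ⟨hpi, hjq⟩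
      · have hj2p : j2 ≠ p := by rw [← hip]; exact h2.1.ne'
        have : i1 = q := by rw [hi, hip, hsp]
        have : j1 = j2 := by rw [hj, hso j2 hj2p hjq.ne]
        have := h1.1
        rw [‹i1 = q›, ‹j1 = j2›] at this
        exact absurd (this.trans hjq) (lt_irrefl q)
      · have hi2q : i2 ≠ q := by rw [← hjq]; exact h2.1.ne
        have : j1 = p := by rw [hj, hjq, hsq]
        have : i1 = i2 := by rw [hi, hso i2 hpi.ne' hi2q]
        have := h1.1
        rw [‹i1 = i2›, ‹j1 = p›] at this
        exact absurd (this.trans hpi) (lt_irrefl i2)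
    · rw [if_neg hm1, if_neg hm2] at heq
      have h1' : i1 = i2 := by
        have := congrArg Prod.fst heq
        simp only at this
        have := congrArg s this
        rwa [hss, hss] at this
      have h2' : j1 = j2 := by
        have := congrArg Prod.snd heq
        simp only at this
        have := congrArg s this
        rwa [hss, hss] at this
      rw [h1', h2']
  calc Su.card ≤ (Sx.erase (p, q)).card := Finset.card_le_card_of_injOn φ hmaps hinj
    _ < Sx.card := Finset.card_erase_lt_of_mem hpqx

theorem fcount_le_of_step {N I K : ℕ} {u x : Equiv.Perm (Fin N)} (h : BruhatStep u x) :
    (Finset.univ.filter fun i : Fin N => (i : ℕ) < I ∧ K ≤ (u i : ℕ)).card ≤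
    (Finset.univ.filter fun i : Fin N => (i : ℕ) < I ∧ K ≤ (x i : ℕ)).card := by
  obtain ⟨⟨a, b, hab, hx⟩, hlen⟩ := h
  have key : ∃ p q : Fin N, p < q ∧ x = Equiv.swap (u p) (u q) * u := by
    rcases lt_trichotomy (u⁻¹ a) (u⁻¹ b) with hlt | heq | hgt
    · exact ⟨u⁻¹ a, u⁻¹ b, hlt, by
        rw [hx, Equiv.Perm.coe_inv, Equiv.apply_symm_apply, Equiv.apply_symm_apply]⟩
    · exact absurd (by rw [← Equiv.apply_symm_apply u a, ← Equiv.Perm.coe_inv, heq,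
        Equiv.Perm.coe_inv, Equiv.apply_symm_apply] : a = b) hab
    · exact ⟨u⁻¹ b, u⁻¹ a, hgt, by
        rw [hx, Equiv.Perm.coe_inv, Equiv.apply_symm_apply, Equiv.apply_symm_apply, Equiv.swap_comm]⟩
  obtain ⟨p, q, hpq, hxe⟩ := key
  have hxp : x p = u q := by
    rw [hxe, Equiv.Perm.mul_apply, Equiv.swap_apply_left]
  have hxq : x q = u p := by
    rw [hxe, Equiv.Perm.mul_apply, Equiv.swap_apply_right]
  have hxo : ∀ i, i ≠ p → i ≠ q → x i = u i := by
    intro i hip hiq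
    rw [hxe, Equiv.Perm.mul_apply]
    exact Equiv.swap_apply_of_ne_of_ne (fun hc => hip (u.injective hc))
      (fun hc => hiq (u.injective hc))
  have hne : u p ≠ u q := fun hc => hpq.ne (u.injective hc)
  have hupq : u p < u q := by
    rcases lt_or_gt_of_ne hne with h1 | h1
    · exact h1
    · exfalso
      have h2 : x p < x q := by rw [hxp, hxq]; exact h1
      have h3 := invCount_lt_swap x p q hpq h2
      have h4 : Equiv.swap (x p) (x q) * x = u := by
        rw [hxp, hxq, hxe, ← mul_assoc, Equiv.swap_comm, Equiv.swap_mul_self, one_mul]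
      rw [h4] at h3
      omega
  apply Finset.card_le_card_of_injOn (fun i => if (i = q ∧ (u p : ℕ) < K) then p else i)
  · intro i hi
    simp only [Finset.mem_coe, Finset.mem_filter, Finset.mem_univ, true_and] at hi ⊢
    by_cases hc : i = q ∧ (u p : ℕ) < K
    · rw [if_pos hc]
      have hqI : (q : ℕ) < I := hc.1 ▸ hi.1
      have hKb : K ≤ (u q : ℕ) := by rw [← hc.1]; exact hi.2
      refine ⟨?_, ?_⟩
      · have : (p : ℕ) < (q : ℕ) := hpq
        omega
      · rw [hxp]; exact hKb
    · rw [if_neg hc]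
      refine ⟨hi.1, ?_⟩
      by_cases hiq : i = q
      · have hKa : K ≤ (u p : ℕ) := by
          by_contra hcon
          exact hc ⟨hiq, by omega⟩
        rw [hiq, hxq]; exact hKa
      · by_cases hip : i = p
        · rw [hip, hxp]
          have : (u p : ℕ) < (u q : ℕ) := hupq
          have : K ≤ (u p : ℕ) := by rw [← hip]; exact hi.2
          omega
        · rw [hxo i hip hiq]; exact hi.2
  · intro i1 h1 i2 h2 heq
    simp only [Finset.coe_filter, Set.mem_setOf_eq, Finset.mem_univ, true_and] at h1 h2
    simp only at heq
    by_cases hc1 : i1 = q ∧ (u p : ℕ) < K <;> by_cases hc2 : i2 = q ∧ (u p : ℕ) < K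
    · rw [hc1.1, hc2.1]
    · rw [if_pos hc1, if_neg hc2] at heq
      exfalso
      rw [← heq] at h2
      exact absurd h2.2 (by omega)
    · rw [if_neg hc1, if_pos hc2] at heq
      exfalso
      rw [heq] at h1
      exact absurd h1.2 (by omega)
    · rw [if_neg hc1, if_neg hc2] at heq
      exact heq

theorem fcount_le_of_bruhatLE {N I K : ℕ} {u x : Equiv.Perm (Fin N)} (h : BruhatLE u x) :
    (Finset.univ.filter fun i : Fin N => (i : ℕ) < I ∧ K ≤ (u i : ℕ)).card ≤
    (Finset.univ.filter fun i : Fin N => (i : ℕ) < I ∧ K ≤ (x i : ℕ)).card := by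
  induction h with
  | refl => exact le_refl _
  | tail _ hstep ih => exact le_trans ih (fcount_le_of_step hstep)

theorem chain_le {G : ℕ → ℕ} {s : ℕ} (e : ℕ) (h : ∀ k, s ≤ k → k + 1 ≤ e → G k < G (k + 1)) :
    ∀ d, s + d ≤ e → G s + d ≤ G (s + d) := by
  intro d
  induction d with
  | zero => simp
  | succ d ih =>
    intro hd
    have h1 := ih (by omega)
    have h2 := h (s + d) (by omega) (by omega)
    have h3 : s + (d + 1) = (s + d) + 1 := by omega
    rw [h3]
    omega

end BruhatHelpers

/-- For `w ∈ S_{m,ℓ}`, `v ∈ S_{n,ℓ}` and `v₀ = w[n,ℓ]`: if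
`1_m ⊞ v₀ ≤ (w ⊞ 1_n)·(1_m ⊞ v)` in the Bruhat order on `S_{m+n+ℓ}`,
then `v = v₀`. -/
theorem eq_wshift_of_bruhatLE (l m n : ℕ) (hl : 0 < l) (hm : 0 < m) (hn : 0 < n)
    (w : Equiv.Perm (Fin (m + l))) (hw : IsMinRep m l w)
    (v : Equiv.Perm (Fin (n + l))) (hv : IsMinRep n l v)
    (h : BruhatLE (bpSecond m l n (wshift n l)) (bpFirst m l n w * bpSecond m l n v)) :
    v = wshift n l := by
  set x := bpFirst m l n w * bpSecond m l n v with hxdef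
  -- Step A : the source has at least n "high in first block" positions
  have hA : n ≤ (Finset.univ.filter fun i : Fin (m + n + l) =>
      (i : ℕ) < m + n ∧ m + l ≤ ((bpSecond m l n (wshift n l)) i : ℕ)).card := by
    have hcard := Finset.card_le_card_of_injOn
      (fun t : Fin n => (⟨m + (t : ℕ), by omega⟩ : Fin (m + n + l)))
      (s := (Finset.univ : Finset (Fin n)))
      (t := Finset.univ.filter fun i : Fin (m + n + l) =>
        (i : ℕ) < m + n ∧ m + l ≤ ((bpSecond m l n (wshift n l)) i : ℕ)) ?_ ?_
    · simpa using hcard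
    · intro t _
      simp only [Finset.mem_coe, Finset.mem_filter, Finset.mem_univ, true_and]
      have ht := t.isLt
      refine ⟨by omega, ?_⟩
      rw [bpSecond_val_ge m l n (wshift n l) ⟨m + (t : ℕ), by omega⟩
        (by show m ≤ m + (t : ℕ); omega)]
      have hb : ((⟨m + (t : ℕ) - m, by omega⟩ : Fin (n + l)) : ℕ) < n := by
        show m + (t : ℕ) - m < n; omega
      rw [wshift_val_lt n l _ hb]
      show m + l ≤ m + (m + (t : ℕ) - m + l)
      omega
    · intro t1 _ t2 _ heq
      have : m + (t1 : ℕ) = m + (t2 : ℕ) := congrArg Fin.val heq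
      exact Fin.ext (by omega)
  -- Step B : monotonicity along the Bruhat order
  have hB := fcount_le_of_bruhatLE (I := m + n) (K := m + l) h
  have hnx : n ≤ (Finset.univ.filter fun i : Fin (m + n + l) =>
      (i : ℕ) < m + n ∧ m + l ≤ (x i : ℕ)).card := le_trans hA hB
  -- Step C : v maps the last block into low values
  have hkey : ∀ b : Fin (n + l), l ≤ (v b : ℕ) → (b : ℕ) < n := by
    by_contra hcon
    push_neg at hcon
    obtain ⟨b, hlb, hnb⟩ := hcon
    have hjlt : m + (b : ℕ) < m + n + l := by have := b.isLt; omega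
    set j : Fin (m + n + l) := ⟨m + (b : ℕ), hjlt⟩ with hjdef
    have hj2 : m + l ≤ ((bpSecond m l n v) j : ℕ) := by
      rw [bpSecond_val_ge m l n v j (by show m ≤ m + (b : ℕ); omega)]
      have hbeq : (⟨(j : ℕ) - m, by have := j.isLt; omega⟩ : Fin (n + l)) = b :=
        Fin.ext (by show m + (b : ℕ) - m = (b : ℕ); omega)
      rw [hbeq]
      omega
    have hjx : m + l ≤ (x j : ℕ) := by
      have hxj : x j = bpFirst m l n w ((bpSecond m l n v) j) := rfl
      rw [hxj, bpFirst_val_ge m l n w _ hj2]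
      exact hj2
    set S := (Finset.univ.filter fun i : Fin (m + n + l) =>
      (i : ℕ) < m + n ∧ m + l ≤ (x i : ℕ)) with hSdef
    have hjS : j ∉ S := by
      simp only [hSdef, Finset.mem_filter, Finset.mem_univ, true_and, not_and]
      intro hc
      exfalso
      have hc' : m + (b : ℕ) < m + n := hc
      omega
    have hcard1 : n + 1 ≤ (insert j S).card := by
      rw [Finset.card_insert_of_notMem hjS]
      omega
    have hcard2 : (insert j S).card ≤ (Finset.range n).card := by
      apply Finset.card_le_card_of_injOn (fun i => (x i : ℕ) - (m + l))
      · intro i hi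
        have hge : m + l ≤ (x i : ℕ) := by
          rcases Finset.mem_insert.1 hi with rfl | hiS
          · exact hjx
          · exact ((Finset.mem_filter.1 hiS).2).2
        have hlt := (x i).isLt
        simp only [Finset.mem_coe, Finset.mem_range]
        omega
      · intro i1 hi1 i2 hi2 heq
        have hge1 : m + l ≤ (x i1 : ℕ) := by
          rcases Finset.mem_insert.1 hi1 with rfl | hiS
          · exact hjx
          · exact ((Finset.mem_filter.1 hiS).2).2
        have hge2 : m + l ≤ (x i2 : ℕ) := by
          rcases Finset.mem_insert.1 hi2 with rfl | hiS
          · exact hjx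
          · exact ((Finset.mem_filter.1 hiS).2).2
        simp only at heq
        have : (x i1 : ℕ) = (x i2 : ℕ) := by omega
        exact x.injective (Fin.ext this)
    rw [Finset.card_range] at hcard2
    omega
  have hkey2 : ∀ b : Fin (n + l), n ≤ (b : ℕ) → (v b : ℕ) < l := by
    intro b hb
    by_contra hcon
    have := hkey b (by omega)
    omega
  -- the auxiliary ℕ-valued function
  set G : ℕ → ℕ := fun k => if hk : k < n + l then (v ⟨k, hk⟩ : ℕ) else 0 with hGdef
  have hGval : ∀ (k : ℕ) (hk : k < n + l), G k = (v ⟨k, hk⟩ : ℕ) := by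
    intro k hk
    simp only [hGdef, dif_pos hk]
  have h2 : ∀ k, n ≤ k → k + 1 ≤ n + l - 1 → G k < G (k + 1) := by
    intro k hk1 hk2
    have ha : k < n + l := by omega
    have hb : k + 1 < n + l := by omega
    rw [hGval k ha, hGval (k + 1) hb]
    exact hv.2 ⟨k, ha⟩ ⟨k + 1, hb⟩ (by simp [Fin.lt_def]) hk1
  -- block 2 : v (n + d) = d
  have vB : ∀ (k : ℕ) (hk1 : n ≤ k) (hk2 : k < n + l), G k = k - n := by
    intro k hk1 hk2
    have hlow := chain_le (s := n) (n + l - 1) h2 (k - n) (by omega)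
    have hhigh := chain_le (s := k) (n + l - 1)
      (fun k' hk' he => h2 k' (le_trans hk1 hk') he) (n + l - 1 - k) (by omega)
    have htop : G (n + l - 1) < l := by
      have hlt : n + l - 1 < n + l := by omega
      rw [hGval _ hlt]
      exact hkey2 ⟨n + l - 1, hlt⟩ (by show n ≤ n + l - 1; omega)
    have hke : n + (k - n) = k := by omega
    rw [hke] at hlow
    have hke2 : k + (n + l - 1 - k) = n + l - 1 := by omega
    rw [hke2] at hhigh
    omega
  -- block 1 values are ≥ l
  have vA1 : ∀ b : Fin (n + l), (b : ℕ) < n → l ≤ (v b : ℕ) := by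
    intro b hb
    by_contra hcon
    push_neg at hcon
    have hc : n + (v b : ℕ) < n + l := by omega
    have hGc := vB (n + (v b : ℕ)) (by omega) hc
    rw [hGval _ hc] at hGc
    have hveq : v ⟨n + (v b : ℕ), hc⟩ = v b := Fin.ext (by omega)
    have := v.injective hveq
    have hval : n + (v b : ℕ) = (b : ℕ) := congrArg Fin.val this
    omega
  have h1 : ∀ k, 0 ≤ k → k + 1 ≤ n - 1 → G k < G (k + 1) := by
    intro k _ hk2
    have ha : k < n + l := by omega
    have hb : k + 1 < n + l := by omega
    rw [hGval k ha, hGval (k + 1) hb]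
    exact hv.1 ⟨k, ha⟩ ⟨k + 1, hb⟩ (by simp [Fin.lt_def]) (by show k + 1 < n; omega)
  -- block 1 : v d = l + d
  have vA : ∀ (k : ℕ) (hk : k < n), G k = k + l := by
    intro k hk
    have hlow := chain_le (s := 0) (n - 1) h1 k (by omega)
    have hhigh := chain_le (s := k) (n - 1)
      (fun k' hk' he => h1 k' (by omega) he) (n - 1 - k) (by omega)
    have hbot : l ≤ G 0 := by
      have h0 : (0 : ℕ) < n + l := by omega
      rw [hGval 0 h0]
      exact vA1 ⟨0, h0⟩ hn
    have htop : G (n - 1) < n + l := by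
      have hlt : n - 1 < n + l := by omega
      rw [hGval _ hlt]
      exact (v _).isLt
    have hke : 0 + k = k := by omega
    rw [hke] at hlow
    have hke2 : k + (n - 1 - k) = n - 1 := by omega
    rw [hke2] at hhigh
    omega
  -- conclusion
  refine Equiv.ext fun b => Fin.ext ?_
  by_cases hb : (b : ℕ) < n
  · have hG := vA (b : ℕ) hb
    rw [hGval (b : ℕ) b.isLt] at hG
    have hvb : v ⟨(b : ℕ), b.isLt⟩ = v b := by congr 1
    rw [hvb] at hG
    rw [wshift_val_lt n l b hb, hG]
  · push_neg at hb
    have hG := vB (b : ℕ) hb b.isLt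
    rw [hGval (b : ℕ) b.isLt] at hG
    have hvb : v ⟨(b : ℕ), b.isLt⟩ = v b := by congr 1
    rw [hvb] at hG
    rw [wshift_val_ge n l b hb, hG]
end

section
/- Let a, n, b be nonnegative integers with a+n+b ≥ 1, and let v be a permutation of {1,…,a+n+b} such that v(j) = j for every j with a < j ≤ a+n, and such that v⁻¹ is strictly increasing on {1,…,a} and on {a+n+1,…,a+n+b}. Let k = #{s : 1 ≤ s ≤ a and v⁻¹(s) > a+n}. Then k also equals #{t : a+n < t ≤ a+n+b and v⁻¹(t) ≤ a}, and the following four identities hold: {1,…,a} ∩ v({1,…,a}) = {1,…,a−k}; {1,…,a} ∩ v({a+n+1,…,a+n+b}) = {a−k+1,…,a}; {a+n+1,…,a+n+b} ∩ v({1,…,a}) = {a+n+1,…,a+n+k}; and {a+n+1,…,a+n+b} ∩ v({a+n+1,…,a+n+b}) = {a+n+k+1,…,a+n+b}. -/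
/-- The block of `0`-indexed positions `[lo, hi)` in `Fin N`, i.e. the
`1`-indexed interval `{lo+1, …, hi}`. -/
def blk (N lo hi : ℕ) : Finset (Fin N) :=
  Finset.univ.filter (fun i : Fin N => lo ≤ (i : ℕ) ∧ (i : ℕ) < hi)

/-- An upward-closed subset of `[0, a)` of cardinality `k` is `[a-k, a)`. -/
lemma nat_up_closed (a k : ℕ) (T : Finset ℕ)
    (hT : ∀ x ∈ T, x < a)
    (hcl : ∀ x ∈ T, ∀ y, x ≤ y → y < a → y ∈ T)
    (hcard : T.card = k) : T = Finset.Ico (a - k) a := by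
  ext x
  simp only [Finset.mem_Ico]
  constructor
  · intro hx
    have hxa := hT x hx
    have hsub : Finset.Ico x a ⊆ T := by
      intro y hy
      simp only [Finset.mem_Ico] at hy
      exact hcl x hx y hy.1 hy.2
    have hle := Finset.card_le_card hsub
    rw [Nat.card_Ico, hcard] at hle
    omega
  · rintro ⟨h1, h2⟩
    by_contra hx
    have hsub : T ⊆ Finset.Ico (x + 1) a := by
      intro y hy
      simp only [Finset.mem_Ico]
      refine ⟨?_, hT y hy⟩
      by_contra hyx
      exact hx (hcl y hy x (by omega) h2)
    have hle := Finset.card_le_card hsub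
    rw [Nat.card_Ico, hcard] at hle
    omega

/-- A downward-closed subset of `[lo, hi)` of cardinality `k` is `[lo, lo+k)`. -/
lemma nat_down_closed (lo hi k : ℕ) (T : Finset ℕ)
    (hT : ∀ x ∈ T, lo ≤ x ∧ x < hi)
    (hcl : ∀ x ∈ T, ∀ y, lo ≤ y → y ≤ x → y ∈ T)
    (hcard : T.card = k) : T = Finset.Ico lo (lo + k) := by
  ext x
  simp only [Finset.mem_Ico]
  constructor
  · intro hx
    have hxa := hT x hx
    have hsub : Finset.Ico lo (x + 1) ⊆ T := by
      intro y hy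
      simp only [Finset.mem_Ico] at hy
      exact hcl x hx y hy.1 (by omega)
    have hle := Finset.card_le_card hsub
    rw [Nat.card_Ico, hcard] at hle
    omega
  · rintro ⟨h1, h2⟩
    by_contra hx
    have hsub : T ⊆ Finset.Ico lo x := by
      intro y hy
      simp only [Finset.mem_Ico]
      refine ⟨(hT y hy).1, ?_⟩
      by_contra hyx
      exact hx (hcl y hy x h1 (by omega))
    have hle := Finset.card_le_card hsub
    rw [Nat.card_Ico, hcard] at hle
    omega

/-- Let `v` be a permutation of `{1,…,a+n+b}` (encoded `0`-indexed) fixing the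
middle block pointwise, with `v⁻¹` strictly increasing on the first block
`{1,…,a}` and on the last block `{a+n+1,…,a+n+b}`.  Let
`k = #{s ≤ a : v⁻¹(s) > a+n}`.  Then `k = #{t > a+n : v⁻¹(t) ≤ a}` and the four
intersection identities of blocks with images of blocks hold. -/
theorem block_image_inter (a n b : ℕ) (hpos : 1 ≤ a + n + b)
    (v : Equiv.Perm (Fin (a + n + b)))
    (hfix : ∀ j : Fin (a + n + b), a ≤ (j : ℕ) → (j : ℕ) < a + n → v j = j)
    (hinc1 : ∀ i j : Fin (a + n + b), i < j → (j : ℕ) < a → v.symm i < v.symm j)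
    (hinc2 : ∀ i j : Fin (a + n + b), i < j → a + n ≤ (i : ℕ) → v.symm i < v.symm j)
    (k : ℕ)
    (hk : k = (Finset.univ.filter
      (fun s : Fin (a + n + b) => (s : ℕ) < a ∧ a + n ≤ ((v.symm s : Fin (a + n + b)) : ℕ))).card) :
    k = (Finset.univ.filter
        (fun t : Fin (a + n + b) =>
          a + n ≤ (t : ℕ) ∧ ((v.symm t : Fin (a + n + b)) : ℕ) < a)).card ∧
    blk (a + n + b) 0 a ∩ Finset.image (fun i => v i) (blk (a + n + b) 0 a)
      = blk (a + n + b) 0 (a - k) ∧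
    blk (a + n + b) 0 a ∩ Finset.image (fun i => v i) (blk (a + n + b) (a + n) (a + n + b))
      = blk (a + n + b) (a - k) a ∧
    blk (a + n + b) (a + n) (a + n + b) ∩ Finset.image (fun i => v i) (blk (a + n + b) 0 a)
      = blk (a + n + b) (a + n) (a + n + k) ∧
    blk (a + n + b) (a + n) (a + n + b) ∩
        Finset.image (fun i => v i) (blk (a + n + b) (a + n) (a + n + b))
      = blk (a + n + b) (a + n + k) (a + n + b) := by
  -- the middle block is fixed by `v.symm` as well
  have hmid : ∀ x : Fin (a + n + b), a ≤ (x : ℕ) → (x : ℕ) < a + n → v.symm x = x := by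
    intro x h1 h2
    exact (Equiv.symm_apply_eq v).mpr (hfix x h1 h2).symm
  -- images of outer-block elements avoid the middle block
  have F1 : ∀ x : Fin (a + n + b), (x : ℕ) < a →
      ((v.symm x : Fin (a + n + b)) : ℕ) < a ∨ a + n ≤ ((v.symm x : Fin (a + n + b)) : ℕ) := by
    intro x hx
    by_contra hcon
    push_neg at hcon
    obtain ⟨h1, h2⟩ := hcon
    have h3 := hfix (v.symm x) h1 h2
    rw [Equiv.apply_symm_apply] at h3
    have h4 := congrArg Fin.val h3
    omega
  have F2 : ∀ x : Fin (a + n + b), a + n ≤ (x : ℕ) →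
      ((v.symm x : Fin (a + n + b)) : ℕ) < a ∨ a + n ≤ ((v.symm x : Fin (a + n + b)) : ℕ) := by
    intro x hx
    by_contra hcon
    push_neg at hcon
    obtain ⟨h1, h2⟩ := hcon
    have h3 := hfix (v.symm x) h1 h2
    rw [Equiv.apply_symm_apply] at h3
    have h4 := congrArg Fin.val h3
    omega
  -- monotone closure properties
  have up : ∀ x y : Fin (a + n + b), (x : ℕ) ≤ (y : ℕ) → (y : ℕ) < a →
      a + n ≤ ((v.symm x : Fin (a + n + b)) : ℕ) →
      a + n ≤ ((v.symm y : Fin (a + n + b)) : ℕ) := by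
    intro x y hxy hy hx
    rcases Nat.eq_or_lt_of_le hxy with h | h
    · have hxy' : x = y := Fin.ext h
      rw [← hxy']; exact hx
    · have h2 := hinc1 x y (Fin.lt_def.mpr h) hy
      have h3 : ((v.symm x : Fin (a + n + b)) : ℕ) < ((v.symm y : Fin (a + n + b)) : ℕ) :=
        Fin.lt_def.mp h2
      omega
  have down : ∀ x y : Fin (a + n + b), a + n ≤ (y : ℕ) → (y : ℕ) ≤ (x : ℕ) →
      ((v.symm x : Fin (a + n + b)) : ℕ) < a →
      ((v.symm y : Fin (a + n + b)) : ℕ) < a := by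
    intro x y hy hyx hx
    rcases Nat.eq_or_lt_of_le hyx with h | h
    · have hxy' : y = x := Fin.ext h
      rw [hxy']; exact hx
    · have h2 := hinc2 y x (Fin.lt_def.mpr h) hy
      have h3 : ((v.symm y : Fin (a + n + b)) : ℕ) < ((v.symm x : Fin (a + n + b)) : ℕ) :=
        Fin.lt_def.mp h2
      omega
  -- cardinality of the first block
  have hcardA : (Finset.univ.filter (fun y : Fin (a + n + b) => (y : ℕ) < a)).card = a := by
    have heq : (Finset.univ.filter (fun y : Fin (a + n + b) => (y : ℕ) < a)).card
        = (Finset.range a).card := by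
      refine Finset.card_nbij (fun y => (y : ℕ)) ?_ ?_ ?_
      · intro y hy
        simp only [Finset.coe_filter, Finset.mem_univ, true_and, Set.mem_setOf_eq] at hy
        simpa using hy
      · intro y1 _ y2 _ h
        exact Fin.ext h
      · intro m hm
        simp only [Finset.coe_range, Set.mem_Iio] at hm
        exact ⟨⟨m, by omega⟩, by simp [hm], rfl⟩
    simpa using heq
  -- cardinality of the preimage of the first block
  have hcardP : (Finset.univ.filter
      (fun x : Fin (a + n + b) => ((v.symm x : Fin (a + n + b)) : ℕ) < a)).card = a := by
    have himg : Finset.univ.filter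
        (fun x : Fin (a + n + b) => ((v.symm x : Fin (a + n + b)) : ℕ) < a)
        = Finset.image (fun i => v i)
            (Finset.univ.filter (fun y : Fin (a + n + b) => (y : ℕ) < a)) := by
      ext x
      simp only [Finset.mem_filter, Finset.mem_univ, true_and, Finset.mem_image]
      constructor
      · intro h
        exact ⟨v.symm x, h, v.apply_symm_apply x⟩
      · rintro ⟨y, hy, rfl⟩
        simpa using hy
    rw [himg, Finset.card_image_of_injective _ v.injective, hcardA]
  -- the splitting of the first block
  have hsplitA : Finset.univ.filter (fun x : Fin (a + n + b) => (x : ℕ) < a)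
      = (Finset.univ.filter (fun x : Fin (a + n + b) =>
          (x : ℕ) < a ∧ ((v.symm x : Fin (a + n + b)) : ℕ) < a))
        ∪ (Finset.univ.filter (fun x : Fin (a + n + b) =>
          (x : ℕ) < a ∧ a + n ≤ ((v.symm x : Fin (a + n + b)) : ℕ))) := by
    ext x
    simp only [Finset.mem_filter, Finset.mem_union, Finset.mem_univ, true_and]
    constructor
    · intro hx
      rcases F1 x hx with h | h
      · exact Or.inl ⟨hx, h⟩
      · exact Or.inr ⟨hx, h⟩
    · rintro (⟨h, _⟩ | ⟨h, _⟩) <;> exact h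
  have hdisjA : Disjoint
      (Finset.univ.filter (fun x : Fin (a + n + b) =>
        (x : ℕ) < a ∧ ((v.symm x : Fin (a + n + b)) : ℕ) < a))
      (Finset.univ.filter (fun x : Fin (a + n + b) =>
        (x : ℕ) < a ∧ a + n ≤ ((v.symm x : Fin (a + n + b)) : ℕ))) := by
    rw [Finset.disjoint_left]
    intro x h1 h2
    simp only [Finset.mem_filter, Finset.mem_univ, true_and] at h1 h2
    omega
  -- splitting of the preimage of the first block
  have hsplitP : Finset.univ.filter
      (fun x : Fin (a + n + b) => ((v.symm x : Fin (a + n + b)) : ℕ) < a)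
      = (Finset.univ.filter (fun x : Fin (a + n + b) =>
          (x : ℕ) < a ∧ ((v.symm x : Fin (a + n + b)) : ℕ) < a))
        ∪ (Finset.univ.filter (fun x : Fin (a + n + b) =>
          a + n ≤ (x : ℕ) ∧ ((v.symm x : Fin (a + n + b)) : ℕ) < a)) := by
    ext x
    simp only [Finset.mem_filter, Finset.mem_union, Finset.mem_univ, true_and]
    constructor
    · intro hx
      by_cases h1 : (x : ℕ) < a
      · exact Or.inl ⟨h1, hx⟩
      · by_cases h2 : a + n ≤ (x : ℕ)
        · exact Or.inr ⟨h2, hx⟩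
        · exfalso
          have := hmid x (by omega) (by omega)
          have h4 := congrArg Fin.val this
          omega
    · rintro (⟨_, h⟩ | ⟨_, h⟩) <;> exact h
  have hdisjP : Disjoint
      (Finset.univ.filter (fun x : Fin (a + n + b) =>
        (x : ℕ) < a ∧ ((v.symm x : Fin (a + n + b)) : ℕ) < a))
      (Finset.univ.filter (fun x : Fin (a + n + b) =>
        a + n ≤ (x : ℕ) ∧ ((v.symm x : Fin (a + n + b)) : ℕ) < a)) := by
    rw [Finset.disjoint_left]
    intro x h1 h2
    simp only [Finset.mem_filter, Finset.mem_univ, true_and] at h1 h2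
    omega
  have hcA := Finset.card_union_of_disjoint hdisjA
  have hcP := Finset.card_union_of_disjoint hdisjP
  rw [← hsplitA, hcardA] at hcA
  rw [← hsplitP, hcardP] at hcP
  -- claim 1
  have claim1 : k = (Finset.univ.filter
      (fun t : Fin (a + n + b) =>
        a + n ≤ (t : ℕ) ∧ ((v.symm t : Fin (a + n + b)) : ℕ) < a)).card := by
    omega
  -- characterization of the "crossing" set in the first block
  have hS2img : (Finset.univ.filter (fun x : Fin (a + n + b) =>
      (x : ℕ) < a ∧ a + n ≤ ((v.symm x : Fin (a + n + b)) : ℕ))).image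
        (fun x : Fin (a + n + b) => (x : ℕ)) = Finset.Ico (a - k) a := by
    apply nat_up_closed a k
    · intro m hm
      simp only [Finset.mem_image, Finset.mem_filter, Finset.mem_univ, true_and] at hm
      obtain ⟨x, ⟨hx1, _⟩, rfl⟩ := hm
      exact hx1
    · intro m hm y hmy hya
      simp only [Finset.mem_image, Finset.mem_filter, Finset.mem_univ, true_and] at hm ⊢
      obtain ⟨x, ⟨hx1, hx2⟩, rfl⟩ := hm
      refine ⟨⟨y, by omega⟩, ⟨hya, ?_⟩, rfl⟩
      exact up x ⟨y, by omega⟩ hmy hya hx2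
    · rw [Finset.card_image_of_injective _ Fin.val_injective]
      exact hk.symm
  have L1 : ∀ x : Fin (a + n + b), (x : ℕ) < a →
      (a + n ≤ ((v.symm x : Fin (a + n + b)) : ℕ) ↔ a - k ≤ (x : ℕ)) := by
    intro x hx
    constructor
    · intro h
      have hmem : (x : ℕ) ∈ Finset.Ico (a - k) a := by
        rw [← hS2img]
        exact Finset.mem_image_of_mem _ (by
          simp only [Finset.mem_filter, Finset.mem_univ, true_and]
          exact ⟨hx, h⟩)
      exact (Finset.mem_Ico.mp hmem).1
    · intro h
      have hmem : (x : ℕ) ∈ (Finset.univ.filter (fun x : Fin (a + n + b) =>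
          (x : ℕ) < a ∧ a + n ≤ ((v.symm x : Fin (a + n + b)) : ℕ))).image
            (fun x : Fin (a + n + b) => (x : ℕ)) := by
        rw [hS2img]
        exact Finset.mem_Ico.mpr ⟨h, hx⟩
      obtain ⟨y, hy, hyx⟩ := Finset.mem_image.mp hmem
      rw [Fin.val_injective hyx] at hy
      simp only [Finset.mem_filter, Finset.mem_univ, true_and] at hy
      exact hy.2
  -- characterization of the "crossing" set in the last block
  have hT1img : (Finset.univ.filter (fun x : Fin (a + n + b) =>
      a + n ≤ (x : ℕ) ∧ ((v.symm x : Fin (a + n + b)) : ℕ) < a)).image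
        (fun x : Fin (a + n + b) => (x : ℕ)) = Finset.Ico (a + n) (a + n + k) := by
    apply nat_down_closed (a + n) (a + n + b) k
    · intro m hm
      simp only [Finset.mem_image, Finset.mem_filter, Finset.mem_univ, true_and] at hm
      obtain ⟨x, ⟨hx1, _⟩, rfl⟩ := hm
      exact ⟨hx1, x.isLt⟩
    · intro m hm y hy hym
      simp only [Finset.mem_image, Finset.mem_filter, Finset.mem_univ, true_and] at hm ⊢
      obtain ⟨x, ⟨hx1, hx2⟩, rfl⟩ := hm
      refine ⟨⟨y, by omega⟩, ⟨hy, ?_⟩, rfl⟩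
      exact down x ⟨y, by omega⟩ hy hym hx2
    · rw [Finset.card_image_of_injective _ Fin.val_injective]
      exact claim1.symm
  have L2 : ∀ x : Fin (a + n + b), a + n ≤ (x : ℕ) →
      (((v.symm x : Fin (a + n + b)) : ℕ) < a ↔ (x : ℕ) < a + n + k) := by
    intro x hx
    constructor
    · intro h
      have hmem : (x : ℕ) ∈ Finset.Ico (a + n) (a + n + k) := by
        rw [← hT1img]
        exact Finset.mem_image_of_mem _ (by
          simp only [Finset.mem_filter, Finset.mem_univ, true_and]
          exact ⟨hx, h⟩)
      exact (Finset.mem_Ico.mp hmem).2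
    · intro h
      have hmem : (x : ℕ) ∈ (Finset.univ.filter (fun x : Fin (a + n + b) =>
          a + n ≤ (x : ℕ) ∧ ((v.symm x : Fin (a + n + b)) : ℕ) < a)).image
            (fun x : Fin (a + n + b) => (x : ℕ)) := by
        rw [hT1img]
        exact Finset.mem_Ico.mpr ⟨hx, h⟩
      obtain ⟨y, hy, hyx⟩ := Finset.mem_image.mp hmem
      rw [Fin.val_injective hyx] at hy
      simp only [Finset.mem_filter, Finset.mem_univ, true_and] at hy
      exact hy.2
  -- membership in images of blocks
  have hmemimg : ∀ (lo hi : ℕ) (x : Fin (a + n + b)),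
      x ∈ Finset.image (fun i => v i) (blk (a + n + b) lo hi) ↔
        lo ≤ ((v.symm x : Fin (a + n + b)) : ℕ) ∧ ((v.symm x : Fin (a + n + b)) : ℕ) < hi := by
    intro lo hi x
    simp only [blk, Finset.mem_image, Finset.mem_filter, Finset.mem_univ, true_and]
    constructor
    · rintro ⟨i, hi', rfl⟩
      simpa using hi'
    · intro h
      exact ⟨v.symm x, h, v.apply_symm_apply x⟩
  refine ⟨claim1, ?_, ?_, ?_, ?_⟩
  · ext x
    rw [Finset.mem_inter, hmemimg]
    simp only [blk, Finset.mem_filter, Finset.mem_univ, true_and]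
    constructor
    · rintro ⟨⟨-, h1⟩, -, h2⟩
      refine ⟨Nat.zero_le _, ?_⟩
      by_contra hcon
      push_neg at hcon
      have := (L1 x h1).mpr hcon
      omega
    · rintro ⟨-, h⟩
      have h1 : (x : ℕ) < a := by omega
      refine ⟨⟨Nat.zero_le _, h1⟩, Nat.zero_le _, ?_⟩
      rcases F1 x h1 with hf | hf
      · exact hf
      · exfalso
        have := (L1 x h1).mp hf
        omega
  · ext x
    rw [Finset.mem_inter, hmemimg]
    simp only [blk, Finset.mem_filter, Finset.mem_univ, true_and]
    constructor
    · rintro ⟨⟨-, h1⟩, h2, -⟩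
      exact ⟨(L1 x h1).mp h2, h1⟩
    · rintro ⟨h1, h2⟩
      exact ⟨⟨Nat.zero_le _, h2⟩, (L1 x h2).mpr h1,
        ((v.symm x : Fin (a + n + b)) : ℕ).lt_of_lt_of_le (v.symm x).isLt le_rfl⟩
  · ext x
    rw [Finset.mem_inter, hmemimg]
    simp only [blk, Finset.mem_filter, Finset.mem_univ, true_and]
    constructor
    · rintro ⟨⟨h1, -⟩, -, h2⟩
      exact ⟨h1, (L2 x h1).mp h2⟩
    · rintro ⟨h1, h2⟩
      exact ⟨⟨h1, x.isLt⟩, Nat.zero_le _, (L2 x h1).mpr h2⟩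
  · ext x
    rw [Finset.mem_inter, hmemimg]
    simp only [blk, Finset.mem_filter, Finset.mem_univ, true_and]
    constructor
    · rintro ⟨⟨h1, h2⟩, h3, -⟩
      refine ⟨?_, h2⟩
      by_contra hcon
      push_neg at hcon
      have := (L2 x h1).mpr (by omega)
      omega
    · rintro ⟨h1, h2⟩
      have h3 : a + n ≤ (x : ℕ) := by omega
      refine ⟨⟨h3, h2⟩, ?_, (v.symm x).isLt⟩
      rcases F2 x h3 with hf | hf
      · exfalso
        have := (L2 x h3).mp hf
        omega
      · exact hf
end

section
/- Let a, n, b be nonnegative integers with a+n+b ≥ 1, and let v be a permutation of {1,…,a+n+b} such that v(j) = j for every j with a < j ≤ a+n, and such that v⁻¹ is strictly increasing on {1,…,a} and on {a+n+1,…,a+n+b}. Let k = #{s : 1 ≤ s ≤ a and v⁻¹(s) > a+n}. Then the number of pairs (s,t) with 1 ≤ s ≤ a, a+n < t ≤ a+n+b and v(s) > v(t) is at most k(a+b) − k². -/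
open Finset

lemma aux_card_lt (N m : ℕ) (h : m ≤ N) :
    ((Finset.univ : Finset (Fin N)).filter fun p : Fin N => (p : ℕ) < m).card = m := by
  have : (Finset.univ.filter fun p : Fin N => (p : ℕ) < m) =
      Finset.map (Fin.castLEEmb h) Finset.univ := by
    ext p
    simp only [Finset.mem_filter, Finset.mem_map, Finset.mem_univ, true_and,
      Fin.castLEEmb_apply]
    constructor
    · intro hp; exact ⟨⟨p, hp⟩, Fin.ext rfl⟩
    · rintro ⟨q, rfl⟩; exact q.isLt
  rw [this, Finset.card_map, Finset.card_univ, Fintype.card_fin]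

/-- Let `v` be a permutation of `{1,…,a+n+b}` (encoded `0`-indexed) fixing the
middle block pointwise, with `v⁻¹` strictly increasing on the first block
`{1,…,a}` and on the last block `{a+n+1,…,a+n+b}`.  Let
`k = #{s ≤ a : v⁻¹(s) > a+n}`.  Then the number of pairs `(s,t)` with
`s ≤ a < a+n < t` and `v(s) > v(t)` is at most `k(a+b) - k²`. -/
theorem crossing_inversions_le (a n b : ℕ) (hpos : 1 ≤ a + n + b)
    (v : Equiv.Perm (Fin (a + n + b)))
    (hfix : ∀ j : Fin (a + n + b), a ≤ (j : ℕ) → (j : ℕ) < a + n → v j = j)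
    (hinc1 : ∀ i j : Fin (a + n + b), i < j → (j : ℕ) < a → v.symm i < v.symm j)
    (hinc2 : ∀ i j : Fin (a + n + b), i < j → a + n ≤ (i : ℕ) → v.symm i < v.symm j)
    (k : ℕ)
    (hk : k = (Finset.univ.filter
      (fun s : Fin (a + n + b) => (s : ℕ) < a ∧ a + n ≤ ((v.symm s : Fin (a + n + b)) : ℕ))).card) :
    (Finset.univ.filter
        (fun p : Fin (a + n + b) × Fin (a + n + b) =>
          (p.1 : ℕ) < a ∧ a + n ≤ (p.2 : ℕ) ∧ v p.2 < v p.1)).card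
      ≤ k * (a + b) - k * k := by
  classical
  have hmid : ∀ p : Fin (a + n + b), a ≤ (v p : ℕ) → (v p : ℕ) < a + n → v p = p := by
    intro p h1 h2
    exact v.injective (hfix (v p) h1 h2)
  have hAorB : ∀ p : Fin (a + n + b), ((p : ℕ) < a ∨ a + n ≤ (p : ℕ)) →
      ((v p : ℕ) < a ∨ a + n ≤ ((v p : ℕ))) := by
    intro p hp
    by_contra h
    push_neg at h
    obtain ⟨h1, h2⟩ := h
    have hm := hmid p (by omega) h2
    have : (v p : ℕ) = (p : ℕ) := congrArg Fin.val hm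
    omega
  have hAorB' : ∀ p : Fin (a + n + b), ((v p : ℕ) < a ∨ a + n ≤ ((v p : ℕ))) →
      ((p : ℕ) < a ∨ a + n ≤ (p : ℕ)) := by
    intro p hp
    by_contra h
    push_neg at h
    have hmid2 : v p = p := hfix p (by omega) (by omega)
    have : (v p : ℕ) = (p : ℕ) := congrArg Fin.val hmid2
    omega
  set Sf := (Finset.univ.filter fun s : Fin (a + n + b) => (s : ℕ) < a ∧ a + n ≤ ((v s : Fin (a + n + b)) : ℕ))
    with hSf
  set Tf := (Finset.univ.filter fun t : Fin (a + n + b) => a + n ≤ (t : ℕ) ∧ ((v t : Fin (a + n + b)) : ℕ) < a)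
    with hTf
  -- the set of crossing inversions is Sf ×ˢ Tf
  have hset : (Finset.univ.filter
        (fun p : Fin (a + n + b) × Fin (a + n + b) =>
          (p.1 : ℕ) < a ∧ a + n ≤ (p.2 : ℕ) ∧ v p.2 < v p.1)) = Sf ×ˢ Tf := by
    ext p
    simp only [Finset.mem_filter, Finset.mem_univ, true_and, Finset.mem_product, hSf, hTf]
    constructor
    · rintro ⟨h1, h2, h3⟩
      have hv1 : a + n ≤ (v p.1 : ℕ) := by
        rcases hAorB p.1 (Or.inl h1) with h | h
        · exfalso
          have := hinc1 (v p.2) (v p.1) h3 h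
          simp only [Equiv.symm_apply_apply] at this
          rw [Fin.lt_def] at this
          omega
        · exact h
      have hv2 : (v p.2 : ℕ) < a := by
        rcases hAorB p.2 (Or.inr h2) with h | h
        · exact h
        · exfalso
          have := hinc2 (v p.2) (v p.1) h3 h
          simp only [Equiv.symm_apply_apply] at this
          rw [Fin.lt_def] at this
          omega
      exact ⟨⟨h1, hv1⟩, h2, hv2⟩
    · rintro ⟨⟨h1, hv1⟩, h2, hv2⟩
      exact ⟨h1, h2, by rw [Fin.lt_def]; omega⟩
  -- Tf.card = k
  have hTk : Tf.card = k := by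
    rw [hk]
    apply Finset.card_bij' (fun t _ => v t) (fun s _ => v.symm s)
    · intro t ht
      simp only [hTf, Finset.mem_filter, Finset.mem_univ, true_and] at ht
      simp only [Finset.mem_filter, Finset.mem_univ, true_and, Equiv.symm_apply_apply]
      exact ⟨ht.2, ht.1⟩
    · intro s hs
      simp only [Finset.mem_filter, Finset.mem_univ, true_and] at hs
      simp only [hTf, Finset.mem_filter, Finset.mem_univ, true_and, Equiv.apply_symm_apply]
      exact ⟨hs.2, hs.1⟩
    · intro t _; exact v.symm_apply_apply t
    · intro s _; exact v.apply_symm_apply s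
  -- counting: Sf.card = Tf.card
  have hcardA : ((Finset.univ : Finset (Fin (a + n + b))).filter
      fun p : Fin (a + n + b) => (p : ℕ) < a).card = a :=
    aux_card_lt (a + n + b) a (by omega)
  have hcardVA : ((Finset.univ : Finset (Fin (a + n + b))).filter
      fun p : Fin (a + n + b) => (v p : ℕ) < a).card = a := by
    refine Eq.trans ?_ hcardA
    apply Finset.card_bij' (fun t _ => v t) (fun s _ => v.symm s)
    · intro t ht
      simp only [Finset.mem_filter, Finset.mem_univ, true_and] at ht ⊢
      exact ht
    · intro s hs
      simp only [Finset.mem_filter, Finset.mem_univ, true_and, Equiv.apply_symm_apply] at hs ⊢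
      exact hs
    · intro t _; exact v.symm_apply_apply t
    · intro s _; exact v.apply_symm_apply s
  have hsplit1 : ((Finset.univ : Finset (Fin (a + n + b))).filter
        fun p : Fin (a + n + b) => (p : ℕ) < a ∧ (v p : ℕ) < a).card + Sf.card = a := by
    refine Eq.trans ?_ hcardA
    have e1 : ((Finset.univ : Finset (Fin (a + n + b))).filter
          fun p : Fin (a + n + b) => (p : ℕ) < a ∧ (v p : ℕ) < a) =
        ((Finset.univ : Finset (Fin (a + n + b))).filter
          (fun p : Fin (a + n + b) => (p : ℕ) < a)).filter
          (fun p : Fin (a + n + b) => (v p : ℕ) < a) := by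
      rw [Finset.filter_filter]
    have e2 : Sf = ((Finset.univ : Finset (Fin (a + n + b))).filter
          (fun p : Fin (a + n + b) => (p : ℕ) < a)).filter
          (fun p : Fin (a + n + b) => ¬ (v p : ℕ) < a) := by
      rw [hSf, Finset.filter_filter]
      apply Finset.filter_congr
      intro p _
      constructor
      · rintro ⟨h1, h2⟩; exact ⟨h1, by omega⟩
      · rintro ⟨h1, h2⟩
        have := hAorB p (Or.inl h1)
        exact ⟨h1, by omega⟩
    rw [e1, e2]
    exact Finset.card_filter_add_card_filter_not _
  have hsplit2 : ((Finset.univ : Finset (Fin (a + n + b))).filter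
        fun p : Fin (a + n + b) => (p : ℕ) < a ∧ (v p : ℕ) < a).card + Tf.card = a := by
    refine Eq.trans ?_ hcardVA
    have e1 : ((Finset.univ : Finset (Fin (a + n + b))).filter
          fun p : Fin (a + n + b) => (p : ℕ) < a ∧ (v p : ℕ) < a) =
        ((Finset.univ : Finset (Fin (a + n + b))).filter
          (fun p : Fin (a + n + b) => (v p : ℕ) < a)).filter
          (fun p : Fin (a + n + b) => (p : ℕ) < a) := by
      rw [Finset.filter_filter]
      apply Finset.filter_congr
      intro p _
      tauto
    have e2 : Tf = ((Finset.univ : Finset (Fin (a + n + b))).filter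
          (fun p : Fin (a + n + b) => (v p : ℕ) < a)).filter
          (fun p : Fin (a + n + b) => ¬ (p : ℕ) < a) := by
      rw [hTf, Finset.filter_filter]
      apply Finset.filter_congr
      intro p _
      constructor
      · rintro ⟨h1, h2⟩; exact ⟨h2, by omega⟩
      · rintro ⟨h1, h2⟩
        have := hAorB' p (Or.inl h1)
        exact ⟨by omega, h1⟩
    rw [e1, e2]
    exact Finset.card_filter_add_card_filter_not _
  have hSk : Sf.card = k := by omega
  -- k ≤ a and k ≤ b
  have hka : k ≤ a := by
    rw [← hSk]
    refine le_trans (Finset.card_le_card ?_) (le_of_eq hcardA)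
    intro p hp
    simp only [hSf, Finset.mem_filter, Finset.mem_univ, true_and] at hp ⊢
    exact hp.1
  have hcardB : ((Finset.univ : Finset (Fin (a + n + b))).filter
      fun p : Fin (a + n + b) => a + n ≤ (p : ℕ)).card = b := by
    have hneg : ((Finset.univ : Finset (Fin (a + n + b))).filter
          fun p : Fin (a + n + b) => a + n ≤ (p : ℕ)) =
        ((Finset.univ : Finset (Fin (a + n + b))).filter
          fun p : Fin (a + n + b) => ¬ (p : ℕ) < a + n) := by
      apply Finset.filter_congr
      intro p _
      constructor <;> omega
    have h2 := Finset.card_filter_add_card_filter_not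
      (s := (Finset.univ : Finset (Fin (a + n + b))))
      (p := fun p : Fin (a + n + b) => (p : ℕ) < a + n)
    rw [aux_card_lt (a + n + b) (a + n) (by omega), Finset.card_univ, Fintype.card_fin] at h2
    rw [hneg]
    omega
  have hkb : k ≤ b := by
    rw [← hTk]
    refine le_trans (Finset.card_le_card ?_) (le_of_eq hcardB)
    intro p hp
    simp only [hTf, Finset.mem_filter, Finset.mem_univ, true_and] at hp ⊢
    exact hp.1
  rw [hset, Finset.card_product, hSk, hTk]
  have h1 : k * k ≤ k * a := Nat.mul_le_mul_left k hka
  have h2 : k * k ≤ k * b := Nat.mul_le_mul_left k hkb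
  have h3 : k * (a + b) = k * a + k * b := Nat.mul_add k a b
  omega
end
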